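/- Let q = p^e with p an odd prime, b ∈ F_q with b ≠ 0, and 0 ≤ k ≤ q. The number of tuples (a_2,...,a_q) ∈ F_q^{q-1} such that x^q - b x^{q-1} + a_2 x^{q-2} + ... + a_q has exactly k distinct roots in F_q equals 0 if k = q, and equals (1/q) * C(q,k) * ((q-1)^{q-k} - (-1)^{q-k}) if k ≤ q-1. -/

import Mathlib

open Finset Polynomial

set_option linter.unusedSectionVars false
set_option maxHeartbeats 1000000

section Aux
variable {F : Type*} [Field F] [Fintype F] [DecidableEq F]

variable {F : Type*} [Field F] [Fintype F] [DecidableEq F]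

noncomputable def cntI (F : Type*) [Field F] [Fintype F] (ι : Type*) [Fintype ι] (c : F) : ℕ :=
  Nat.card {x : ι → F // (∀ i, x i ≠ 0) ∧ ∑ i, x i = c}

lemma cntI_congr {ι κ : Type*} [Fintype ι] [Fintype κ] (e : ι ≃ κ) (c : F) :
    cntI F ι c = cntI F κ c := by
  apply Nat.card_congr
  refine (Equiv.arrowCongr e (Equiv.refl F)).subtypeEquiv fun x => ?_
  simp only [Equiv.arrowCongr_apply, Equiv.refl_apply, Function.comp_apply, Equiv.coe_refl,
    id_eq]
  constructor
  · rintro ⟨h1, h2⟩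
    exact ⟨fun j => h1 _, by rw [Equiv.sum_comp e.symm (fun i => x i)]; exact h2⟩
  · rintro ⟨h1, h2⟩
    refine ⟨fun i => by simpa using h1 (e i), ?_⟩
    rwa [Equiv.sum_comp e.symm (fun i => x i)] at h2

lemma cntI_zero (c : F) : cntI F (Fin 0) c = if c = 0 then 1 else 0 := by
  rw [cntI]
  split
  · rename_i h
    subst h
    rw [Nat.card_eq_one_iff_unique]
    constructor
    · constructor
      rintro ⟨x, _⟩ ⟨y, _⟩
      ext i
      exact i.elim0
    · exact ⟨⟨fun i => i.elim0, fun i => i.elim0, by simp⟩⟩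
  · rename_i h
    rw [Nat.card_eq_zero]
    left
    constructor
    rintro ⟨x, _, hx⟩
    simp at hx
    exact h hx.symm

lemma cntI_succ (m : ℕ) (c : F) :
    cntI F (Fin (m + 1)) c = ∑ y : F, if y = 0 then 0 else cntI F (Fin m) (c - y) := by
  have e : {x : Fin (m + 1) → F // (∀ i, x i ≠ 0) ∧ ∑ i, x i = c} ≃
      Σ y : F, {x : Fin m → F // y ≠ 0 ∧ ((∀ i, x i ≠ 0) ∧ ∑ i, x i = c - y)} :=
    { toFun := fun z => ⟨z.1 0, Fin.tail z.1, z.2.1 0, fun i => z.2.1 _, by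
        rw [eq_sub_iff_add_eq, add_comm]
        have := z.2.2
        rw [Fin.sum_univ_succ (f := z.1)] at this
        simpa [Fin.tail] using this⟩
      invFun := fun z => ⟨Fin.cons z.1 z.2.1, by
        obtain ⟨y, x, hy, h1, h2⟩ := z
        refine ⟨fun i => ?_, ?_⟩
        · refine Fin.cases ?_ ?_ i
          · simpa using hy
          · intro j; simpa using h1 j
        · rw [Fin.sum_univ_succ]
          simp only [Fin.cons_zero, Fin.cons_succ]
          rw [h2]; ring⟩
      left_inv := fun z => by
        ext i
        simp [Fin.cons_self_tail]
      right_inv := fun z => by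
        obtain ⟨y, x, h⟩ := z
        refine Sigma.ext ?_ ?_
        · simp
        · simp [Fin.tail_cons]
          rfl }
  rw [cntI, Nat.card_congr e, Nat.card_eq_fintype_card, Fintype.card_sigma]
  refine Finset.sum_congr rfl fun y _ => ?_
  split
  · rename_i h
    subst h
    simp only [Fintype.card_eq_zero_iff]
    constructor
    rintro ⟨x, hy, _⟩
    exact hy rfl
  · rename_i h
    rw [cntI, Nat.card_eq_fintype_card]
    apply Fintype.card_congr
    exact Equiv.subtypeEquivRight fun x => by tauto




lemma cntI_formula (m : ℕ) (c : F) :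
    (cntI F (Fin m) c : ℚ) * (Fintype.card F : ℚ) =
      if c = 0 then ((Fintype.card F : ℚ) - 1) ^ m + (-1) ^ m * ((Fintype.card F : ℚ) - 1)
      else ((Fintype.card F : ℚ) - 1) ^ m - (-1) ^ m := by
  set Q : ℚ := (Fintype.card F : ℚ) with hQ
  induction m generalizing c with
  | zero =>
    rw [cntI_zero]
    split
    · simp
    · simp
  | succ m ih =>
    rw [cntI_succ, Nat.cast_sum, Finset.sum_mul]
    have key : ∀ y : F, (Nat.cast (if y = 0 then 0 else cntI F (Fin m) (c - y)) : ℚ) * Q =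
        if y = 0 then 0 else if c - y = 0 then (Q - 1) ^ m + (-1) ^ m * (Q - 1)
          else (Q - 1) ^ m - (-1) ^ m := by
      intro y
      split
      · simp
      · exact ih (c - y)
    rw [Finset.sum_congr rfl fun y _ => key y]
    by_cases hc : c = 0
    · subst hc
      rw [if_pos rfl]
      have : ∀ y : F, (if y = 0 then (0:ℚ) else if 0 - y = 0 then (Q - 1) ^ m + (-1) ^ m * (Q - 1)
          else (Q - 1) ^ m - (-1) ^ m)
          = ((Q - 1) ^ m - (-1) ^ m) - (if y = 0 then ((Q - 1) ^ m - (-1) ^ m) else 0) := by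
        intro y
        rcases eq_or_ne y 0 with h | h
        · simp [h]
        · rw [if_neg h, if_neg h, if_neg (by simpa using h), sub_zero]
      rw [Finset.sum_congr rfl fun y _ => this y, Finset.sum_sub_distrib, Finset.sum_const,
        Finset.sum_ite_eq' univ (0 : F) (fun _ => (Q - 1) ^ m - (-1) ^ m), if_pos (mem_univ _),
        card_univ, nsmul_eq_mul, ← hQ]
      ring
    · rw [if_neg hc]
      have : ∀ y : F, (if y = 0 then (0:ℚ) else if c - y = 0 then (Q - 1) ^ m + (-1) ^ m * (Q - 1)
          else (Q - 1) ^ m - (-1) ^ m)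
          = ((Q - 1) ^ m - (-1) ^ m) - (if y = 0 then ((Q - 1) ^ m - (-1) ^ m) else 0)
            + (if y = c then ((-1) ^ m * (Q - 1) + (-1)^m) else 0) := by
        intro y
        rcases eq_or_ne y 0 with h | h
        · subst h
          rw [if_pos rfl, if_pos rfl, if_neg (Ne.symm hc)]
          ring
        · rw [if_neg h, if_neg h]
          rcases eq_or_ne y c with h2 | h2
          · subst h2
            rw [if_pos (sub_self y), if_pos rfl]
            ring
          · rw [if_neg (sub_ne_zero.mpr (Ne.symm h2)), if_neg h2]
            ring
      rw [Finset.sum_congr rfl fun y _ => this y]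
      rw [Finset.sum_add_distrib, Finset.sum_sub_distrib, Finset.sum_const,
        Finset.sum_ite_eq' univ (0 : F) (fun _ => (Q - 1) ^ m - (-1) ^ m), if_pos (mem_univ _),
        Finset.sum_ite_eq' univ c (fun _ => ((-1 : ℚ)) ^ m * (Q - 1) + (-1)^m), if_pos (mem_univ _),
        card_univ, nsmul_eq_mul, ← hQ]
      ring



/-- The fiber over a fixed zero-set `S`. -/
lemma fiber_card (b : F) (S : Finset F) :
    Nat.card {h : F → F // (∑ α, h α = b) ∧ univ.filter (fun α => h α = 0) = S}
      = cntI F {α : F // α ∈ Sᶜ} b := by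
  rw [cntI]
  apply Nat.card_congr
  have memS : ∀ (h : F → F), univ.filter (fun α => h α = 0) = S →
      ∀ α : F, (α ∈ S ↔ h α = 0) := by
    intro h hh α
    rw [← hh, mem_filter]
    simp
  refine
    { toFun := fun h => ⟨fun α => h.1 α.1, ?_, ?_⟩
      invFun := fun x => ⟨fun α => if hα : α ∈ Sᶜ then x.1 ⟨α, hα⟩ else 0, ?_, ?_⟩
      left_inv := ?_
      right_inv := ?_ }
  · intro α
    have hα : α.1 ∉ S := Finset.mem_compl.mp α.2
    exact fun h0 => hα ((memS h.1 h.2.2 α.1).mpr h0)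
  · have h2 := h.2.1
    rw [univ_eq_attach, Finset.sum_attach Sᶜ (fun α => h.1 α)]
    rw [Finset.sum_subset (subset_univ Sᶜ) (fun α _ hα => (memS h.1 h.2.2 α).mp
      (by simpa using hα))]
    exact h2
  · have h2 := x.2.2
    rw [← Finset.sum_subset (subset_univ Sᶜ) (fun α _ hα => dif_neg hα)]
    rw [← Finset.sum_attach Sᶜ (fun α => if hα : α ∈ Sᶜ then x.1 ⟨α, hα⟩ else 0)]
    have key : ∀ α ∈ Sᶜ.attach, (if hα : (α : F) ∈ Sᶜ then x.1 ⟨α, hα⟩ else 0) = x.1 α :=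
      fun α _ => dif_pos α.2
    rw [Finset.sum_congr rfl key, ← univ_eq_attach]
    exact h2
  · ext α
    simp only [mem_filter, mem_univ, true_and]
    by_cases hα : α ∈ Sᶜ
    · rw [dif_pos hα]
      have h1 := x.2.1 ⟨α, hα⟩
      have h2 : α ∉ S := by simpa using hα
      constructor
      · exact fun h => absurd h h1
      · exact fun h => absurd h h2
    · rw [dif_neg hα]
      have h2 : α ∈ S := by simpa using hα
      exact ⟨fun _ => h2, fun _ => rfl⟩
  · intro h
    apply Subtype.ext
    funext α
    dsimp only
    by_cases hα : α ∈ Sᶜ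
    · exact dif_pos hα
    · rw [dif_neg hα]
      have : α ∈ S := by simpa using hα
      exact ((memS h.1 h.2.2 α).mp this).symm
  · intro x
    apply Subtype.ext
    funext α
    dsimp only
    exact dif_pos α.2

lemma count_funcs (b : F) (k : ℕ) :
    Nat.card {h : F → F // (∑ α, h α = b) ∧ Nat.card {α : F // h α = 0} = k}
      = (Fintype.card F).choose k * cntI F (Fin (Fintype.card F - k)) b := by
  have hZ : ∀ h : F → F, Nat.card {α : F // h α = 0} = (univ.filter fun α => h α = 0).card :=
    fun h => by rw [Nat.card_eq_fintype_card, Fintype.card_subtype]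
  rw [Nat.card_eq_fintype_card, Fintype.card_subtype]
  rw [Finset.filter_congr (q := fun h : F → F =>
      (∑ α, h α = b) ∧ (univ.filter fun α => h α = 0).card = k) (fun h _ => by rw [hZ h])]
  rw [Finset.card_eq_sum_card_fiberwise (f := fun h : F → F => univ.filter fun α => h α = 0)
      (t := univ.powersetCard k) (fun h hh => by
        rw [Finset.mem_coe, mem_powersetCard]
        exact ⟨subset_univ _, (mem_filter.mp (Finset.mem_coe.mp hh)).2.2⟩)]
  have step : ∀ S ∈ univ.powersetCard k,
      ((univ.filter fun h : F → F =>
          (∑ α, h α = b) ∧ (univ.filter fun α => h α = 0).card = k).filter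
        (fun h => univ.filter (fun α => h α = 0) = S)).card
      = cntI F (Fin (Fintype.card F - k)) b := by
    intro S hS
    have hSk : S.card = k := (mem_powersetCard.mp hS).2
    have heq : ((univ.filter fun h : F → F =>
          (∑ α, h α = b) ∧ (univ.filter fun α => h α = 0).card = k).filter
        (fun h => univ.filter (fun α => h α = 0) = S))
        = univ.filter fun h : F → F => (∑ α, h α = b) ∧ univ.filter (fun α => h α = 0) = S := by
      ext h
      simp only [mem_filter, mem_univ, true_and]
      constructor
      · rintro ⟨⟨h1, _⟩, h3⟩; exact ⟨h1, h3⟩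
      · rintro ⟨h1, h3⟩; exact ⟨⟨h1, h3 ▸ hSk⟩, h3⟩
    rw [heq, ← Fintype.card_subtype, ← Nat.card_eq_fintype_card, fiber_card b S]
    rw [cntI_congr (Fintype.equivFinOfCardEq (h := ?_)) b]
    rw [Fintype.card_coe, Finset.card_compl, hSk]
  rw [Finset.sum_congr rfl step, Finset.sum_const, Finset.card_powersetCard, Finset.card_univ,
    smul_eq_mul]

lemma sum_phi {q : ℕ} (hF : Fintype.card F = q) (hq3 : 3 ≤ q) (b : F) (a : Fin (q - 1) → F) :
    ∑ α : F, (α ^ q - b * α ^ (q - 1) + ∑ i : Fin (q - 1), a i * α ^ (i : ℕ)) = b := by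
  have h1 : ∑ α : F, α ^ q = 0 := by
    have e : ∀ α : F, α ^ q = α ^ 1 := fun α => by rw [pow_one, ← hF, FiniteField.pow_card]
    rw [Finset.sum_congr rfl fun α _ => e α]
    exact FiniteField.sum_pow_lt_card_sub_one F 1 (by omega)
  have h2 : ∑ α : F, α ^ (q - 1) = -1 := by
    have e : ∀ α : F, α ^ (q - 1) = 1 - (if α = 0 then 1 else 0) := by
      intro α
      by_cases hα : α = 0
      · rw [if_pos hα, hα, zero_pow (by omega), sub_self]
      · rw [if_neg hα, sub_zero, ← hF, FiniteField.pow_card_sub_one_eq_one α hα]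
    rw [Finset.sum_congr rfl fun α _ => e α, Finset.sum_sub_distrib, Finset.sum_const,
      Finset.sum_ite_eq' univ (0 : F) (fun _ => (1 : F)), if_pos (mem_univ _), card_univ,
      nsmul_eq_mul, mul_one, FiniteField.cast_card_eq_zero F, zero_sub]
  have h3 : ∑ α : F, ∑ i : Fin (q - 1), a i * α ^ (i : ℕ) = 0 := by
    rw [Finset.sum_comm]
    apply Finset.sum_eq_zero
    intro i _
    rw [← Finset.mul_sum, FiniteField.sum_pow_lt_card_sub_one F (i : ℕ) (by have := i.isLt; omega), mul_zero]
  rw [Finset.sum_add_distrib, Finset.sum_sub_distrib, ← Finset.mul_sum, h1, h2, h3]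
  ring

lemma phi_inj {q : ℕ} (hF : Fintype.card F = q) (hq3 : 3 ≤ q) (b : F) :
    Function.Injective (fun a : Fin (q - 1) → F =>
      fun α : F => α ^ q - b * α ^ (q - 1) + ∑ i : Fin (q - 1), a i * α ^ (i : ℕ)) := by
  intro a a' h
  have hα : ∀ α : F, ∑ i : Fin (q - 1), a i * α ^ (i : ℕ)
      = ∑ i : Fin (q - 1), a' i * α ^ (i : ℕ) := by
    intro α
    have := congrFun h α
    exact add_left_cancel this
  set P : F[X] := ∑ i : Fin (q - 1), C (a i - a' i) * X ^ (i : ℕ) with hP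
  have heval : ∀ α : F, P.eval α = 0 := by
    intro α
    rw [hP, Polynomial.eval_finset_sum]
    simp only [eval_mul, eval_C, eval_pow, eval_X, sub_mul]
    rw [Finset.sum_sub_distrib, hα α, sub_self]
  have hdeg : P.natDegree < Fintype.card F := by
    have : P.natDegree ≤ q - 2 := by
      apply Polynomial.natDegree_sum_le_of_forall_le
      intro i _
      refine le_trans (Polynomial.natDegree_C_mul_le _ _) ?_
      rw [Polynomial.natDegree_X_pow]
      omega
    omega
  have hP0 : P = 0 :=
    Polynomial.eq_zero_of_natDegree_lt_card_of_eval_eq_zero P Function.injective_id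
      (fun α => heval α) hdeg
  funext i
  have hc : P.coeff (i : ℕ) = a i - a' i := by
    rw [hP, Polynomial.finset_sum_coeff]
    rw [Finset.sum_eq_single i]
    · rw [Polynomial.coeff_C_mul, Polynomial.coeff_X_pow, if_pos rfl, mul_one]
    · intro j _ hj
      rw [Polynomial.coeff_C_mul, Polynomial.coeff_X_pow,
        if_neg (fun hij => hj (Fin.ext hij.symm)), mul_zero]
    · intro hi
      exact absurd (mem_univ i) hi
  rw [hP0, Polynomial.coeff_zero] at hc
  exact sub_eq_zero.mp hc.symm

lemma card_fiber (b : F) :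
    (univ.filter fun h : F → F => ∑ α, h α = b).card
      = (Fintype.card F) ^ (Fintype.card F - 1) := by
  have hq1 : 1 ≤ Fintype.card F := Fintype.card_pos
  have hsame : ∀ c : F, (univ.filter fun h : F → F => ∑ α, h α = c).card
      = (univ.filter fun h : F → F => ∑ α, h α = b).card := by
    intro c
    refine Finset.card_bij' (fun h _ => fun α => h α + (if α = 0 then b - c else 0))
      (fun h _ => fun α => h α + (if α = 0 then c - b else 0)) ?hi ?hj ?li ?ri
    case hi =>
      intro h hh
      rw [mem_filter] at hh ⊢
      refine ⟨mem_univ _, ?_⟩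
      rw [Finset.sum_add_distrib, hh.2, Finset.sum_ite_eq' univ (0 : F) (fun _ => b - c),
        if_pos (mem_univ _)]
      ring
    case hj =>
      intro h hh
      rw [mem_filter] at hh ⊢
      refine ⟨mem_univ _, ?_⟩
      rw [Finset.sum_add_distrib, hh.2, Finset.sum_ite_eq' univ (0 : F) (fun _ => c - b),
        if_pos (mem_univ _)]
      ring
    case li =>
      intro h _
      funext α
      dsimp only
      split_ifs <;> ring
    case ri =>
      intro h _
      funext α
      dsimp only
      split_ifs <;> ring
  have htot : (Fintype.card F) ^ (Fintype.card F)
      = Fintype.card F * (univ.filter fun h : F → F => ∑ α, h α = b).card := by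
    have := Finset.card_eq_sum_card_fiberwise (f := fun h : F → F => ∑ α, h α)
      (s := (univ : Finset (F → F))) (t := univ) (fun h _ => mem_univ _)
    rw [Finset.sum_congr rfl fun c _ => hsame c, Finset.sum_const, card_univ, smul_eq_mul,
      card_univ, Fintype.card_fun] at this
    exact this
  have hsplit : (Fintype.card F) ^ (Fintype.card F)
      = Fintype.card F * (Fintype.card F) ^ (Fintype.card F - 1) := by
    obtain ⟨m, hm⟩ : ∃ m, Fintype.card F = m + 1 := ⟨Fintype.card F - 1, (Nat.succ_pred_eq_of_pos hq1).symm⟩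
    rw [hm, pow_succ, Nat.add_sub_cancel]
    ring
  rw [hsplit] at htot
  exact (Nat.eq_of_mul_eq_mul_left Fintype.card_pos htot).symm

end Aux

theorem stmt_6 (p e q k : ℕ) (hp : p.Prime) (hodd : Odd p) (he : 0 < e) (hq : q = p ^ e)
    (F : Type*) [Field F] [Fintype F] (hF : Fintype.card F = q)
    (b : F) (hb : b ≠ 0) (hk : k ≤ q) :
    (Nat.card {a : Fin (q - 1) → F //
        Nat.card {α : F //
          α ^ q - b * α ^ (q - 1) + ∑ i : Fin (q - 1), a i * α ^ (i : ℕ) = 0} = k} : ℚ)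
      = if k = q then 0
        else (1 / q) * (q.choose k) * (((q : ℚ) - 1) ^ (q - k) - (-1 : ℚ) ^ (q - k)) := by
  letI : DecidableEq F := Classical.decEq F
  have hp3 : 3 ≤ p := by
    have h2 := hp.two_le
    rcases Nat.lt_or_ge p 3 with h | h
    · interval_cases p
      · exact absurd hodd (by decide)
    · exact h
  have hq3 : 3 ≤ q := le_trans hp3 (hq ▸ Nat.le_self_pow he.ne' p)
  have hsum : ∀ a : Fin (q - 1) → F,
      ∑ α : F, (α ^ q - b * α ^ (q - 1) + ∑ i : Fin (q - 1), a i * α ^ (i : ℕ)) = b :=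
    fun a => sum_phi hF hq3 b a
  have hbij : Function.Bijective (fun a : Fin (q - 1) → F =>
      (⟨fun α : F => α ^ q - b * α ^ (q - 1) + ∑ i : Fin (q - 1), a i * α ^ (i : ℕ), hsum a⟩ :
        {h : F → F // ∑ α, h α = b})) := by
    rw [Fintype.bijective_iff_injective_and_card]
    constructor
    · intro a a' hh
      exact phi_inj hF hq3 b (congrArg Subtype.val hh)
    · rw [Fintype.card_fun, Fintype.card_fin, Fintype.card_subtype, card_fiber b, hF]
  have e1 : {a : Fin (q - 1) → F //
        Nat.card {α : F //
          α ^ q - b * α ^ (q - 1) + ∑ i : Fin (q - 1), a i * α ^ (i : ℕ) = 0} = k}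
      ≃ {h : {h : F → F // ∑ α, h α = b} // Nat.card {α : F // h.1 α = 0} = k} :=
    (Equiv.ofBijective _ hbij).subtypeEquiv fun a => Iff.rfl
  have e2 : {h : {h : F → F // ∑ α, h α = b} // Nat.card {α : F // h.1 α = 0} = k}
      ≃ {h : F → F // (∑ α, h α = b) ∧ Nat.card {α : F // h α = 0} = k} :=
    Equiv.subtypeSubtypeEquivSubtypeInter (fun h : F → F => ∑ α, h α = b)
      (fun h : F → F => Nat.card {α : F // h α = 0} = k)
  have hcount : Nat.card {a : Fin (q - 1) → F //
        Nat.card {α : F //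
          α ^ q - b * α ^ (q - 1) + ∑ i : Fin (q - 1), a i * α ^ (i : ℕ) = 0} = k}
      = q.choose k * cntI F (Fin (q - k)) b := by
    rw [Nat.card_congr (e1.trans e2)]
    have h := count_funcs b k
    rw [hF] at h
    exact h
  rw [hcount]
  by_cases hkq : k = q
  · subst hkq
    rw [if_pos rfl, Nat.sub_self, cntI_zero, if_neg hb, mul_zero, Nat.cast_zero]
  · rw [if_neg hkq]
    have hf := cntI_formula (F := F) (q - k) b
    rw [hF, if_neg hb] at hf
    have hq0 : (q : ℚ) ≠ 0 := Nat.cast_ne_zero.mpr (lt_of_lt_of_le (by norm_num) hq3).ne'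
    push_cast
    rw [← hf]
    field_simp
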